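/- Let n be a natural number, let R = AddMonoidAlgebra ℤ (Fin n → ℤ) be the ring of integral Laurent polynomials in n variables, and let ι : R → R be the ring automorphism induced by the negation automorphism ν ↦ −ν of the exponent group Fin n → ℤ. Let ε ∈ {1, −1} ⊆ ℤ, let P ∈ R be nonzero with ι(P) = ε • P, and let ν : Fin n → ℤ. If the element f = (single ν 1) * P also satisfies ι(f) = ε • f, then ν = 0. -/

import Mathlib

open AddMonoidAlgebra

theorem monomial_trivial_of_symmetric {n : ℕ}
    (ι : AddMonoidAlgebra ℤ (Fin n → ℤ) ≃ₐ[ℤ] AddMonoidAlgebra ℤ (Fin n → ℤ))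
    (hι : ι = AddMonoidAlgebra.domCongr ℤ ℤ (AddEquiv.neg (Fin n → ℤ)))
    (ε : ℤ) (hε : ε ∈ ({1, -1} : Set ℤ))
    (P : AddMonoidAlgebra ℤ (Fin n → ℤ)) (hP : P ≠ 0) (hPsym : ι P = ε • P)
    (ν : Fin n → ℤ)
    (hf : ι (AddMonoidAlgebra.single ν 1 * P) = ε • (AddMonoidAlgebra.single ν 1 * P)) :
    ν = 0 := by
  have hε0 : ε ≠ 0 := by
    rcases hε with h | h
    · simp [h]
    · simp only [Set.mem_singleton_iff] at h; simp [h]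
  -- compute ι of the product
  have h1 : ι (AddMonoidAlgebra.single ν 1 * P)
      = AddMonoidAlgebra.single (-ν) 1 * ι P := by
    rw [map_mul, hι]
    simp
  have h2 : ε • (AddMonoidAlgebra.single (-ν) 1 * P)
      = ε • (AddMonoidAlgebra.single ν 1 * P) := by
    have := hf
    rw [h1, hPsym, mul_smul_comm] at this
    exact this
  have h3 : AddMonoidAlgebra.single (-ν) 1 * P = AddMonoidAlgebra.single ν 1 * P := by
    haveI : Module.IsTorsionFree ℤ (AddMonoidAlgebra ℤ (Fin n → ℤ)) :=
      inferInstance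
    exact smul_right_injective _ hε0 h2
  -- multiply on the left by single ν 1
  have h4 : P = AddMonoidAlgebra.single (ν + ν) 1 * P := by
    have := congrArg (fun x => AddMonoidAlgebra.single ν 1 * x) h3
    simpa [← mul_assoc, AddMonoidAlgebra.single_mul_single, ← AddMonoidAlgebra.one_def,
      one_mul] using this
  -- compare supports
  have hr : ∀ y : ℤ, (1 : ℤ) * y = 0 ↔ y = 0 := by intro y; simp
  have hsupp : P.coeff.support = P.coeff.support.map (addLeftEmbedding (ν + ν)) := by
    conv_lhs => rw [h4]
    exact AddMonoidAlgebra.support_coeff_single_mul P 1 hr (ν + ν)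
  -- sum of support elements
  have hsum : ∑ x ∈ P.coeff.support, x = ∑ x ∈ P.coeff.support, ((ν + ν) + x) := by
    conv_lhs => rw [hsupp]
    rw [Finset.sum_map]
    rfl
  rw [Finset.sum_add_distrib, Finset.sum_const, right_eq_add] at hsum
  have hcard : 0 < P.coeff.support.card := by
    rw [Finset.card_pos, Finsupp.support_nonempty_iff]
    exact fun h => hP (AddMonoidAlgebra.coeff_eq_zero.mp h)
  funext i
  have h5 : (P.coeff.support.card : ℤ) * (ν i + ν i) = 0 := by
    have := congrFun hsum i
    simp only [Pi.smul_apply, Pi.add_apply, Pi.zero_apply, nsmul_eq_mul] at this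
    exact_mod_cast this
  rcases mul_eq_zero.mp h5 with h | h
  · exact absurd h (by omega)
  · simpa using by omega
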